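/- Let n be a positive integer and let X be a binomial random variable with parameters n and p = δ/d, where 0 < δ ≤ d. Then the probability that X ≤ (δ/(2 log 2 d))·n - (log(10d)/log 2)·m is at most (10d)^{-m}, for any positive real m. -/

import Mathlib

/-- Chernoff-type bound: if `X` is binomial with parameters `n` and `p = δ/d`, then
`P(X ≤ (δ/(2 log 2 · d)) n - (log(10d)/log 2) m) ≤ (10d)^(-m)` for any real `m > 0`. -/
theorem stmt_5 (n d : ℕ) (hd : 1 ≤ d) (δ : ℝ) (hδ : 0 < δ) (hδd : δ ≤ d)
    (m : ℝ) (hm : 0 < m) :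
    (∑ k ∈ Finset.range (n + 1),
      if (k : ℝ) ≤ δ / (2 * Real.log 2 * d) * n - Real.log (10 * d) / Real.log 2 * m
        then (n.choose k : ℝ) * (δ / d) ^ k * (1 - δ / d) ^ (n - k) else 0)
      ≤ (10 * (d : ℝ)) ^ (-m) := by
  have hd0 : (0:ℝ) < d := by exact_mod_cast hd
  set p : ℝ := δ / d with hp
  have hp0 : 0 < p := div_pos hδ hd0
  have hp1 : p ≤ 1 := (div_le_one hd0).mpr hδd
  have h1p : (0:ℝ) ≤ 1 - p := by linarith
  have hlog2 : (0:ℝ) < Real.log 2 := Real.log_pos (by norm_num)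
  set T : ℝ := δ / (2 * Real.log 2 * d) * n - Real.log (10 * d) / Real.log 2 * m with hT
  have h10d : (0:ℝ) < 10 * d := by positivity
  have step1 : (∑ k ∈ Finset.range (n+1),
      if (k:ℝ) ≤ T then (n.choose k : ℝ) * p ^ k * (1-p)^(n-k) else 0)
      ≤ ∑ k ∈ Finset.range (n+1),
        (n.choose k : ℝ) * p ^ k * (1-p)^(n-k) * (2:ℝ)^(T - (k:ℝ)) := by
    apply Finset.sum_le_sum
    intro k _
    have hterm : 0 ≤ (n.choose k : ℝ) * p ^ k * (1-p)^(n-k) := by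
      apply mul_nonneg (mul_nonneg (by positivity) (by positivity)) (pow_nonneg h1p _)
    have hr : (0:ℝ) < (2:ℝ)^(T - (k:ℝ)) := Real.rpow_pos_of_pos (by norm_num) _
    split_ifs with h
    · have h2 : (1:ℝ) ≤ (2:ℝ)^(T - (k:ℝ)) :=
        Real.one_le_rpow (by norm_num) (by linarith)
      exact le_mul_of_one_le_right hterm h2
    · exact mul_nonneg hterm hr.le
  have step2 : ∑ k ∈ Finset.range (n+1),
        (n.choose k : ℝ) * p ^ k * (1-p)^(n-k) * (2:ℝ)^(T - (k:ℝ))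
      = (2:ℝ)^T * (1 - p/2)^n := by
    have key : ∀ k ∈ Finset.range (n+1),
        (n.choose k : ℝ) * p ^ k * (1-p)^(n-k) * (2:ℝ)^(T - (k:ℝ))
        = (2:ℝ)^T * ((p/2) ^ k * (1-p)^(n-k) * (n.choose k : ℝ)) := by
      intro k _
      rw [Real.rpow_sub (by norm_num), Real.rpow_natCast, div_pow p (2:ℝ) k]
      ring
    rw [Finset.sum_congr rfl key, ← Finset.mul_sum, ← add_pow]
    ring_nf
  have step3 : (2:ℝ)^T * (1 - p/2)^n ≤ (10 * (d:ℝ)) ^ (-m) := by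
    have h1 : (1 - p/2)^n ≤ Real.exp (-(p/2))^n := by
      apply pow_le_pow_left₀ (by linarith)
      have := Real.add_one_le_exp (-(p/2))
      linarith
    have h2 : Real.exp (-(p/2))^n = Real.exp (-(p/2) * n) := by
      rw [← Real.exp_nat_mul]; ring_nf
    have h3 : (2:ℝ)^T = Real.exp (Real.log 2 * T) := by
      rw [Real.rpow_def_of_pos (by norm_num)]
    have h4 : (10 * (d:ℝ)) ^ (-m) = Real.exp (Real.log (10 * d) * (-m)) := by
      rw [Real.rpow_def_of_pos h10d]
    calc (2:ℝ)^T * (1 - p/2)^n ≤ Real.exp (Real.log 2 * T) * Real.exp (-(p/2) * n) := by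
          rw [h3]
          exact mul_le_mul_of_nonneg_left (h1.trans_eq h2) (Real.exp_pos _).le
      _ = Real.exp (Real.log 2 * T + (-(p/2) * n)) := (Real.exp_add _ _).symm
      _ = (10 * (d:ℝ)) ^ (-m) := by
          rw [h4]
          congr 1
          rw [hT, hp]
          field_simp
          ring
  calc _ ≤ _ := step1
    _ = _ := step2
    _ ≤ _ := step3
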